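/- arXiv:2504.09526 — 4 statements merged into one kernel-verified Lean document; each statement's English description precedes it below -/
import Mathlib

section
/- Let λ > −1/2 and define K̂_n^λ = 2^{n−1} Γ(2λ+1) Γ(n+λ) / ( Γ(λ+1) Γ(n+2λ) ) and Θ_λ = √(2π) Γ(2λ+1) / Γ(λ+1). Then (n+1)! · K̂_{n+1}^λ is asymptotically equivalent to Θ_λ · n^{3/2−λ} · (2n/e)^n as n → ∞; that is, the ratio ( (n+1)! · K̂_{n+1}^λ ) / ( Θ_λ · n^{3/2−λ} · (2n/e)^n ) tends to 1 as n → ∞. -/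
/-- Leading coefficient `K̂_n^λ = 2^{n−1} Γ(2λ+1) Γ(n+λ) / (Γ(λ+1) Γ(n+2λ))`. -/
noncomputable def Khat (lam : ℝ) (n : ℕ) : ℝ :=
  (2 : ℝ) ^ ((n : ℤ) - 1) * Real.Gamma (2*lam + 1) * Real.Gamma ((n : ℝ) + lam) /
    (Real.Gamma (lam + 1) * Real.Gamma ((n : ℝ) + 2*lam))

/-- `Θ_λ = √(2π) Γ(2λ+1) / Γ(λ+1)`. -/
noncomputable def Theta (lam : ℝ) : ℝ :=
  Real.sqrt (2 * Real.pi) * Real.Gamma (2*lam + 1) / Real.Gamma (lam + 1)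

open Filter Real
lemma gamma_prod (a : ℝ) (ha : 0 < a) (n : ℕ) :
    Real.Gamma ((n:ℝ) + 1 + a) = Real.Gamma a * ∏ j ∈ Finset.range (n+1), (a + j) := by
  induction n with
  | zero =>
      rw [show ((0:ℕ):ℝ)+1+a = a+1 by push_cast; ring, Real.Gamma_add_one ha.ne']
      simp [mul_comm]
  | succ n ih =>
      have h : ((n:ℝ) + 1 + a) ≠ 0 := by positivity
      rw [show ((n+1:ℕ):ℝ) + 1 + a = ((n:ℝ) + 1 + a) + 1 by push_cast; ring,
        Real.Gamma_add_one h, ih, Finset.prod_range_succ _ (n+1)]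
      push_cast; ring

lemma aux_gamma (a : ℝ) (ha : 0 < a) :
    Tendsto (fun n : ℕ => Real.Gamma ((n:ℝ) + 1 + a) / ((n.factorial : ℝ) * (n:ℝ) ^ a))
      atTop (nhds 1) := by
  have hG : Real.Gamma a ≠ 0 := (Real.Gamma_pos_of_pos ha).ne'
  have h := (tendsto_const_nhds (x := Real.Gamma a)).div (Real.GammaSeq_tendsto_Gamma a) hG
  rw [div_self hG] at h
  refine h.congr fun n => ?_
  show Real.Gamma a / ((n:ℝ) ^ a * (n.factorial:ℝ) / ∏ j ∈ Finset.range (n + 1), (a + j)) = _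
  rw [gamma_prod a ha n, div_div_eq_mul_div, mul_comm ((n:ℝ)^a) _, mul_div_assoc]

lemma stirling_ratio :
    Tendsto (fun n : ℕ => (n.factorial : ℝ) /
      (Real.sqrt (2 * (n:ℝ) * Real.pi) * ((n:ℝ) / Real.exp 1) ^ n)) atTop (nhds 1) := by
  have h := Stirling.factorial_isEquivalent_stirling
  rw [Asymptotics.isEquivalent_iff_tendsto_one ?_] at h
  · exact h
  · filter_upwards [eventually_ge_atTop 1] with n hn
    have hn' : (0:ℝ) < n := by exact_mod_cast hn
    positivity

theorem stmt2 (lam : ℝ) (hlam : -1/2 < lam) :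
    Filter.Tendsto
      (fun n : ℕ =>
        ((Nat.factorial (n + 1) : ℝ) * Khat lam (n + 1)) /
          (Theta lam * (n : ℝ) ^ ((3 : ℝ)/2 - lam) * (2 * (n : ℝ) / Real.exp 1) ^ n))
      Filter.atTop (nhds 1) := by
  have ha1 : (0:ℝ) < lam + 1 := by linarith
  have ha2 : (0:ℝ) < 2*lam + 1 := by linarith
  have hA := aux_gamma (lam + 1) ha1
  have hB := aux_gamma (2*lam + 1) ha2
  have hS := stirling_ratio
  have hg : Tendsto (fun n : ℕ => ((n:ℝ)+1) * ((n:ℝ)+1+2*lam) / (((n:ℝ)+1+lam) * n))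
      atTop (nhds 1) := by
    have t : Tendsto (fun n:ℕ => 1/(n:ℝ)) atTop (nhds 0) := tendsto_one_div_atTop_nhds_zero_nat
    have h1 := (((tendsto_const_nhds (x := (1:ℝ))).add t).mul
        ((tendsto_const_nhds (x := (1:ℝ))).add (t.const_mul (1+2*lam)))).div
        ((tendsto_const_nhds (x := (1:ℝ))).add (t.const_mul (1+lam))) (by norm_num)
    norm_num at h1
    refine h1.congr' ?_
    filter_upwards [eventually_ge_atTop 1] with n hn
    have hx : (0:ℝ) < n := by exact_mod_cast hn
    have hxl : (0:ℝ) < (n:ℝ) + 1 + lam := by linarith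
    have h1l : (0:ℝ) < (1+lam) * ((n:ℝ))⁻¹ := by
      have : (0:ℝ) < 1 + lam := by linarith
      positivity
    have hd : ((1:ℝ) + (1+lam) * ((n:ℝ))⁻¹) ≠ 0 := by linarith
    simp only [Pi.div_apply]
    rw [div_eq_div_iff hd (by positivity)]
    field_simp
    ring
  have key := ((hA.div hB (by norm_num)).mul hS).mul hg
  rw [show (1:ℝ)/1*1*1 = 1 by norm_num] at key
  refine key.congr' ?_
  filter_upwards [eventually_ge_atTop 1] with n hn
  have hx : (0:ℝ) < n := by exact_mod_cast hn
  set x : ℝ := (n:ℝ) with hxdef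
  -- positivity facts
  have hGl : 0 < Real.Gamma (lam + 1) := Real.Gamma_pos_of_pos ha1
  have hG2l : 0 < Real.Gamma (2*lam + 1) := Real.Gamma_pos_of_pos ha2
  have hxl : (0:ℝ) < x + 1 + lam := by linarith
  have hx2l : (0:ℝ) < x + 1 + 2*lam := by linarith
  have hG1 : 0 < Real.Gamma (x + 1 + lam) := Real.Gamma_pos_of_pos (by linarith)
  have hG2 : 0 < Real.Gamma (x + 1 + 2*lam) := Real.Gamma_pos_of_pos (by linarith)
  have hfac : (0:ℝ) < (n.factorial : ℝ) := by exact_mod_cast n.factorial_pos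
  have hsq : (0:ℝ) < Real.sqrt (2*Real.pi) := by positivity
  have hrl : (0:ℝ) < x ^ lam := Real.rpow_pos_of_pos hx _
  have hsx : (0:ℝ) < Real.sqrt x := Real.sqrt_pos.mpr hx
  have he : (0:ℝ) < Real.exp 1 := Real.exp_pos 1
  -- rewrite the Gamma shifts
  have eA : Real.Gamma (x + 1 + (lam + 1)) = (x + 1 + lam) * Real.Gamma (x + 1 + lam) := by
    rw [show x + 1 + (lam + 1) = (x + 1 + lam) + 1 by ring, Real.Gamma_add_one hxl.ne']
  have eB : Real.Gamma (x + 1 + (2*lam + 1)) = (x + 1 + 2*lam) * Real.Gamma (x + 1 + 2*lam) := by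
    rw [show x + 1 + (2*lam + 1) = (x + 1 + 2*lam) + 1 by ring, Real.Gamma_add_one hx2l.ne']
  -- rpow decompositions
  have r1 : x ^ ((3:ℝ)/2 - lam) = x * Real.sqrt x / x ^ lam := by
    rw [show (3:ℝ)/2 - lam = 1 + 1/2 + (-lam) by ring, Real.rpow_add hx, Real.rpow_add hx,
      Real.rpow_one, Real.rpow_neg hx.le, ← Real.sqrt_eq_rpow]
    field_simp
  have r2 : x ^ (lam + 1) = x ^ lam * x := by
    rw [Real.rpow_add hx, Real.rpow_one]
  have r3 : x ^ (2*lam + 1) = x ^ lam * x ^ lam * x := by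
    rw [Real.rpow_add hx, Real.rpow_one, show 2*lam = lam + lam by ring, Real.rpow_add hx]
  have rsq : Real.sqrt (2 * x * Real.pi) = Real.sqrt (2 * Real.pi) * Real.sqrt x := by
    rw [show 2 * x * Real.pi = (2 * Real.pi) * x by ring, Real.sqrt_mul (by positivity)]
  have rpow2 : (2 * x / Real.exp 1) ^ n = 2 ^ n * (x / Real.exp 1) ^ n := by
    rw [show 2 * x / Real.exp 1 = 2 * (x / Real.exp 1) by ring, mul_pow]
  have hpe : (0:ℝ) < (x / Real.exp 1) ^ n := by positivity
  -- unfold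
  simp only [Pi.div_apply, Khat, Theta, Nat.factorial_succ]
  rw [show (((n+1:ℕ):ℤ) - 1) = (n:ℤ) by push_cast; ring, zpow_natCast]
  push_cast
  rw [← hxdef]
  rw [eA, eB, r1, r2, r3, rsq, rpow2]
  have hx2l' : x + 1 + lam * 2 ≠ 0 := by linarith
  have hG2' : Real.Gamma (x + 1 + lam * 2) ≠ 0 := by rw [mul_comm]; exact hG2.ne'
  have hG2l' : Real.Gamma (lam * 2 + 1) ≠ 0 := by rw [mul_comm]; exact hG2l.ne'
  field_simp
end

section
/- Let (k_m)_{m≥1} be positive integers with k_m → ∞ as m → ∞, k_m = o(m), and k_m^3 = O(m). Then there exist a constant C > 0 and M ∈ ℕ such that for all m ≥ M, | log( (m + k_m)! / k_m! ) − ( m log m + (k_m + 1/2) log(m / k_m) + k_m − m − 1/(4 k_m) − k_m^2 / (2m) ) | ≤ C · max( k_m^3 / m^2 , 1 / k_m ). Equivalently, the falling factorial (n)_m with n = m + k_m satisfies (n)_m = m^m (m/k_m)^{k_m + 1/2} e^{ k_m − m − 1/(4 k_m) − k_m^2/(2m) } · exp( O( max( k_m^3/m^2, 1/k_m ) ) )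 as m → ∞. -/
open Asymptotics Filter

private lemma logErr1 (x : ℝ) (h0 : 0 ≤ x) (h2 : x ≤ 1/2) :
    |Real.log (1 + x) - x| ≤ 2 * x ^ 2 := by
  have h := Real.abs_log_sub_add_sum_range_le (x := -x) (by rw [abs_neg, abs_of_nonneg h0]; linarith) 1
  have hs : (∑ i ∈ Finset.range 1, (-x) ^ (i + 1) / (i + 1)) = -x := by
    simp
  rw [hs, abs_neg, abs_of_nonneg h0, sub_neg_eq_add] at h
  calc |Real.log (1 + x) - x| = |-x + Real.log (1 + x)| := by
        rw [show -x + Real.log (1+x) = Real.log (1+x) - x by ring]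
      _ ≤ x ^ (1+1) / (1 - x) := h
      _ ≤ 2 * x ^ 2 := by
        rw [div_le_iff₀ (by linarith)]; norm_num; nlinarith [sq_nonneg x]

private lemma logErr3 (x : ℝ) (h0 : 0 ≤ x) (h2 : x ≤ 1/2) :
    |Real.log (1 + x) - (x - x^2/2 + x^3/3)| ≤ 2 * x ^ 4 := by
  have h := Real.abs_log_sub_add_sum_range_le (x := -x) (by rw [abs_neg, abs_of_nonneg h0]; linarith) 3
  have hs : (∑ i ∈ Finset.range 3, (-x) ^ (i + 1) / (i + 1)) = -x + x^2/2 - x^3/3 := by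
    simp [Finset.sum_range_succ]; ring
  rw [hs, abs_neg, abs_of_nonneg h0, sub_neg_eq_add] at h
  calc |Real.log (1 + x) - (x - x^2/2 + x^3/3)| = |(-x + x^2/2 - x^3/3) + Real.log (1 + x)| := by
        ring_nf
      _ ≤ x ^ (3+1) / (1 - x) := h
      _ ≤ 2 * x ^ 4 := by
        rw [div_le_iff₀ (by linarith)]; norm_num; nlinarith [pow_nonneg h0 4]

private noncomputable def fS (n : ℕ) : ℝ :=
  Real.log (Nat.factorial n) - (((n : ℝ) + 1/2) * Real.log n - n)

private lemma fS_diff (n : ℕ) (hn : 1 ≤ n) :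
    fS n - fS (n + 1) = ((n : ℝ) + 1/2) * Real.log (1 + 1/(n:ℝ)) - 1 := by
  have hn0 : (0:ℝ) < n := by exact_mod_cast hn
  have hfact : (Nat.factorial (n+1) : ℝ) = ((n:ℝ)+1) * Nat.factorial n := by
    push_cast [Nat.factorial_succ]; ring
  have hlf : Real.log (Nat.factorial (n+1)) = Real.log ((n:ℝ)+1) + Real.log (Nat.factorial n) := by
    rw [hfact, Real.log_mul (by positivity) (by positivity)]
  have hl1 : Real.log (1 + 1/(n:ℝ)) = Real.log ((n:ℝ)+1) - Real.log n := by
    rw [show (1 : ℝ) + 1/(n:ℝ) = ((n:ℝ)+1)/n by field_simp,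
      Real.log_div (by positivity) (by positivity)]
  simp only [fS, hlf, hl1]
  push_cast
  ring

private lemma fS_step (n : ℕ) (hn : 2 ≤ n) :
    |fS n - fS (n + 1)| ≤ 3 / (n:ℝ)^2 := by
  have hn0 : (2:ℝ) ≤ n := by exact_mod_cast hn
  have hp : (0:ℝ) < n := by linarith
  set x : ℝ := 1/(n:ℝ) with hx
  have hx0 : 0 ≤ x := by positivity
  have hx2 : x ≤ 1/2 := by rw [hx, div_le_div_iff₀ hp (by norm_num)]; linarith
  have hT := logErr3 x hx0 hx2
  rw [fS_diff n (by omega)]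
  have hid : ((n : ℝ) + 1/2) * (x - x^2/2 + x^3/3) - 1 = 1/(12*(n:ℝ)^2) + 1/(6*(n:ℝ)^3) := by
    rw [hx]; field_simp; ring
  have key : |((n : ℝ) + 1/2) * Real.log (1+x) - 1| ≤
      ((n : ℝ) + 1/2) * (2 * x ^ 4) + (1/(12*(n:ℝ)^2) + 1/(6*(n:ℝ)^3)) := by
    have : ((n : ℝ) + 1/2) * Real.log (1+x) - 1 =
        ((n : ℝ) + 1/2) * (Real.log (1+x) - (x - x^2/2 + x^3/3)) +
        (((n : ℝ) + 1/2) * (x - x^2/2 + x^3/3) - 1) := by ring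
    rw [this]
    refine (abs_add_le _ _).trans (add_le_add ?_ ?_)
    · rw [abs_mul, abs_of_nonneg (by positivity : (0:ℝ) ≤ (n:ℝ)+1/2)]
      exact mul_le_mul_of_nonneg_left hT (by positivity)
    · rw [hid, abs_of_nonneg (by positivity)]
  refine key.trans ?_
  have hx4 : ((n : ℝ) + 1/2) * (2 * x ^ 4) = (2*(n:ℝ) + 1) / (n:ℝ)^4 := by
    rw [hx]; field_simp
  rw [hx4]
  rw [div_add_div _ _ (by positivity) (by positivity),
    div_add_div _ _ (by positivity) (by positivity),
    div_le_div_iff₀ (by positivity) (by positivity)]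
  nlinarith [pow_pos hp 7, pow_pos hp 8, mul_le_mul_of_nonneg_left hn0 (le_of_lt (pow_pos hp 8)),
    mul_le_mul_of_nonneg_left hn0 (le_of_lt (pow_pos hp 7))]

private lemma fS_tele (n : ℕ) (hn : 2 ≤ n) (j : ℕ) :
    |fS n - fS (n + j)| ≤ 3 * (1/((n:ℝ) - 1) - 1/((n:ℝ) + (j:ℝ) - 1)) := by
  induction j with
  | zero => simp
  | succ j ih =>
    have hn1 : (2:ℝ) ≤ n := by exact_mod_cast hn
    have ha : (2:ℝ) ≤ (n:ℝ) + (j:ℝ) := by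
      have : (0:ℝ) ≤ (j:ℝ) := Nat.cast_nonneg j
      linarith
    have hstep := fS_step (n + j) (by omega)
    have hcast : ((n + j : ℕ) : ℝ) = (n:ℝ) + (j:ℝ) := by push_cast; ring
    rw [hcast] at hstep
    have htri : |fS n - fS (n + (j+1))| ≤ |fS n - fS (n + j)| + |fS (n+j) - fS (n+j+1)| := by
      rw [show n + (j+1) = (n + j) + 1 by ring]
      exact abs_sub_le _ _ _
    push_cast
    calc |fS n - fS (n + (j+1))|
        ≤ |fS n - fS (n + j)| + |fS (n+j) - fS (n+j+1)| := htri
      _ ≤ 3 * (1/((n:ℝ) - 1) - 1/((n:ℝ) + (j:ℝ) - 1)) + 3 / ((n:ℝ) + (j:ℝ))^2 := by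
          refine add_le_add ih ?_
          rw [show n + j + 1 = (n + j) + 1 from rfl]
          exact hstep
      _ ≤ 3 * (1/((n:ℝ) - 1) - 1/((n:ℝ) + ((j:ℝ)+1) - 1)) := by
          have h1 : (0:ℝ) < (n:ℝ) + (j:ℝ) - 1 := by linarith
          have h2 : (0:ℝ) < (n:ℝ) + (j:ℝ) := by linarith
          have key : 3 / ((n:ℝ) + (j:ℝ))^2 ≤
              3 * (1/((n:ℝ) + (j:ℝ) - 1) - 1/((n:ℝ) + (j:ℝ))) := by
            have e : 3 * (1/((n:ℝ) + (j:ℝ) - 1) - 1/((n:ℝ) + (j:ℝ))) =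
                3 / (((n:ℝ) + (j:ℝ) - 1) * ((n:ℝ) + (j:ℝ))) := by
              field_simp
              ring
            rw [e, div_le_div_iff₀ (by positivity) (by positivity)]
            nlinarith
          rw [show (n:ℝ) + ((j:ℝ)+1) - 1 = (n:ℝ) + (j:ℝ) by ring]
          linarith

private lemma fS_tele' (n : ℕ) (hn : 2 ≤ n) (j : ℕ) :
    |fS n - fS (n + j)| ≤ 6 / (n:ℝ) := by
  have hn1 : (2:ℝ) ≤ n := by exact_mod_cast hn
  refine (fS_tele n hn j).trans ?_
  have h1 : (0:ℝ) < (n:ℝ) - 1 := by linarith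
  have h2 : (0:ℝ) < (n:ℝ) + (j:ℝ) - 1 := by
    have : (0:ℝ) ≤ (j:ℝ) := Nat.cast_nonneg j
    linarith
  have h3 : (0:ℝ) ≤ 1/((n:ℝ) + (j:ℝ) - 1) := by positivity
  have h4 : 1/((n:ℝ) - 1) ≤ 2/(n:ℝ) := by
    rw [div_le_div_iff₀ h1 (by linarith)]; linarith
  have h5 : (6:ℝ)/(n:ℝ) = 3 * (2/(n:ℝ)) := by ring
  linarith [h4]

set_option maxHeartbeats 1000000 in
theorem stmt3 (k : ℕ → ℕ) (hpos : ∀ m, 0 < k m)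
    (htend : Filter.Tendsto k Filter.atTop Filter.atTop)
    (hsmall : (fun m => (k m : ℝ)) =o[Filter.atTop] (fun m => (m : ℝ)))
    (hcube : (fun m => (k m : ℝ) ^ 3) =O[Filter.atTop] (fun m => (m : ℝ))) :
    ∃ C > (0 : ℝ), ∃ M : ℕ, ∀ m ≥ M,
      |Real.log ((Nat.factorial (m + k m) : ℝ) / (Nat.factorial (k m) : ℝ)) -
          ((m : ℝ) * Real.log (m : ℝ) +
            ((k m : ℝ) + 1/2) * Real.log ((m : ℝ) / (k m : ℝ)) +
            (k m : ℝ) - (m : ℝ) - 1 / (4 * (k m : ℝ)) - (k m : ℝ)^2 / (2 * (m : ℝ)))| ≤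
        C * max ((k m : ℝ)^3 / (m : ℝ)^2) (1 / (k m : ℝ)) := by
  obtain ⟨c, hc⟩ := hcube.bound
  set A : ℝ := max c 1 with hA
  have hA1 : (1:ℝ) ≤ A := le_max_right c 1
  have hA0 : (0:ℝ) < A := by linarith
  have h1 : ∀ᶠ m in atTop, 2 ≤ k m := htend.eventually_ge_atTop 2
  have h2 : ∀ᶠ m in atTop, ‖(k m : ℝ)‖ ≤ (1/2) * ‖(m : ℝ)‖ := hsmall.def (by norm_num)
  obtain ⟨M, hM⟩ := Filter.eventually_atTop.mp ((h1.and h2).and hc)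
  refine ⟨14 * A, by positivity, M, fun m hm => ?_⟩
  obtain ⟨⟨hk2, hkm⟩, hkc⟩ := hM m hm
  set K : ℝ := (k m : ℝ) with hK
  set Mr : ℝ := (m : ℝ) with hMr
  have hK2 : (2:ℝ) ≤ K := by rw [hK]; exact_mod_cast hk2
  have hK0 : (0:ℝ) < K := by linarith
  have hKM : 2 * K ≤ Mr := by
    rw [Real.norm_natCast, Real.norm_natCast] at hkm
    linarith
  have hM0 : (0:ℝ) < Mr := by linarith
  have hAc : K ^ 3 ≤ A * Mr := by
    rw [Real.norm_natCast] at hkc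
    calc K ^ 3 ≤ ‖K ^ 3‖ := le_abs_self _
      _ ≤ c * Mr := hkc
      _ ≤ A * Mr := mul_le_mul_of_nonneg_right (le_max_left c 1) hM0.le
  set x : ℝ := K / Mr with hx
  have hx0 : 0 ≤ x := by positivity
  have hx2 : x ≤ 1/2 := by
    rw [hx, div_le_iff₀ hM0]; linarith
  set L : ℝ := Real.log (1 + x) with hL
  -- key splitting identity
  have e1 : Real.log (Mr + K) = Real.log Mr + L := by
    rw [hL, show (1:ℝ) + x = (Mr + K)/Mr by rw [hx]; field_simp,
      Real.log_div (by positivity) hM0.ne']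
    ring
  have e2 : Real.log (Mr / K) = Real.log Mr - Real.log K := Real.log_div hM0.ne' hK0.ne'
  have hsplit :
      Real.log ((Nat.factorial (m + k m) : ℝ) / (Nat.factorial (k m) : ℝ)) -
          (Mr * Real.log Mr + (K + 1/2) * Real.log (Mr / K) +
            K - Mr - 1 / (4 * K) - K^2 / (2 * Mr)) =
      (fS (m + k m) - fS (k m)) +
        ((Mr + K + 1/2) * L - K + 1 / (4 * K) + K^2 / (2 * Mr)) := by
    have hcast : ((m + k m : ℕ) : ℝ) = Mr + K := by push_cast; ring
    rw [Real.log_div (Nat.cast_ne_zero.mpr (Nat.factorial_pos _).ne')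
      (Nat.cast_ne_zero.mpr (Nat.factorial_pos _).ne')]
    simp only [fS, hcast, e1, e2]
    ring
  rw [hsplit]
  -- bound telescoping part
  have hb1 : |fS (m + k m) - fS (k m)| ≤ 6 / K := by
    rw [abs_sub_comm, Nat.add_comm m (k m)]
    exact fS_tele' (k m) hk2 m
  -- bound E part
  have hlog := logErr1 x hx0 hx2
  have hEid : (Mr + K + 1/2) * L - K + 1 / (4 * K) + K^2 / (2 * Mr) =
      (Mr + K + 1/2) * (L - x) + (K^2/Mr + K/(2*Mr) + 1/(4*K) + K^2/(2*Mr)) := by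
    rw [hx]; field_simp; ring
  have hb2 : |(Mr + K + 1/2) * L - K + 1 / (4 * K) + K^2 / (2 * Mr)| ≤
      7 * K^2 / Mr + 1 / (4 * K) := by
    rw [hEid]
    refine (abs_add_le _ _).trans ?_
    have t1 : |(Mr + K + 1/2) * (L - x)| ≤ 2 * Mr * (2 * x^2) := by
      rw [abs_mul, abs_of_nonneg (by positivity : (0:ℝ) ≤ Mr + K + 1/2)]
      refine mul_le_mul (by linarith) hlog (abs_nonneg _) (by positivity)
    have t1' : 2 * Mr * (2 * x^2) = 4 * K^2 / Mr := by
      rw [hx]; field_simp; ring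
    have t2 : |K^2/Mr + K/(2*Mr) + 1/(4*K) + K^2/(2*Mr)| =
        K^2/Mr + K/(2*Mr) + 1/(4*K) + K^2/(2*Mr) := by
      rw [abs_of_nonneg (by positivity)]
    have t3' : K/(2*Mr) ≤ K^2/(2*Mr) := by
      gcongr
      exact le_self_pow₀ (by linarith) two_ne_zero
    rw [t2]
    rw [t1'] at t1
    have e1 : 4*K^2/Mr = 4*(K^2/Mr) := by ring
    have e2 : 7*K^2/Mr = 7*(K^2/Mr) := by ring
    have e3 : K^2/(2*Mr) = (1/2)*(K^2/Mr) := by ring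
    have hu : 0 ≤ K^2/Mr := by positivity
    linarith [t1, t3', hu]
  -- assemble
  have hKA : K^2 / Mr ≤ A / K := by
    rw [div_le_div_iff₀ hM0 hK0]
    nlinarith
  have hmax : 1 / K ≤ max (K^3 / Mr^2) (1 / K) := le_max_right _ _
  calc |(fS (m + k m) - fS (k m)) +
        ((Mr + K + 1/2) * L - K + 1 / (4 * K) + K^2 / (2 * Mr))|
      ≤ |fS (m + k m) - fS (k m)| +
        |(Mr + K + 1/2) * L - K + 1 / (4 * K) + K^2 / (2 * Mr)| := abs_add_le _ _
    _ ≤ 6 / K + (7 * K^2 / Mr + 1 / (4 * K)) := add_le_add hb1 hb2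
    _ ≤ 6 / K + (7 * (A / K) + 1 / (4 * K)) := by
        have : 7 * K^2 / Mr ≤ 7 * (A / K) := by
          rw [mul_div_assoc]
          exact mul_le_mul_of_nonneg_left hKA (by norm_num)
        linarith
    _ ≤ (14 * A) * (1 / K) := by
        have heq : 6/K + (7*(A/K) + 1/(4*K)) = (6 + 7*A + 1/4)/K := by
          field_simp; ring
        have heq2 : (14*A) * (1/K) = (14*A)/K := by ring
        rw [heq, heq2]
        gcongr
        linarith
    _ ≤ (14 * A) * max (K^3 / Mr^2) (1 / K) := by
        exact mul_le_mul_of_nonneg_left hmax (by positivity)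
end

section
/- The function T1(λ) = (1 + 2λ)^{−1/2 − 2λ} is strictly concave on the open interval (−1/2, 0): for all λ1, λ2 ∈ (−1/2, 0) with λ1 ≠ λ2 and all s ∈ (0,1), T1( s λ1 + (1 − s) λ2 ) > s · T1(λ1) + (1 − s) · T1(λ2). -/
open Real Set

noncomputable def Tfun (x : ℝ) : ℝ := Real.exp ((-1/2 - 2*x) * Real.log (1 + 2*x))

noncomputable def Gfun (x : ℝ) : ℝ := -2 * Real.log (1 + 2*x) + (1/(1 + 2*x) - 2)

lemma key1 (t : ℝ) (ht : 1 < t) : (Real.log t + t/2 - 1)^2 < t + t^2/2 := by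
  have ht0 : (0:ℝ) < t := by linarith
  set c : ℝ := t ^ ((1:ℝ)/3) with hcdef
  have hc1 : 1 < c := Real.one_lt_rpow_iff_of_pos ht0 |>.2 (Or.inl ⟨ht, by norm_num⟩)
  have hc0 : (0:ℝ) < c := by linarith
  have hct : c^3 = t := by
    rw [hcdef, ← Real.rpow_natCast (t ^ ((1:ℝ)/3)) 3, ← Real.rpow_mul ht0.le]
    norm_num
  have hlog : Real.log c = (1/3) * Real.log t := by
    rw [hcdef, Real.log_rpow ht0]
  set l : ℝ := Real.log c with hldef
  have hl0 : 0 ≤ l := Real.log_nonneg hc1.le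
  have hl : l ≤ c - 1 := by
    have := Real.log_le_sub_one_of_pos hc0
    linarith
  have hlt : Real.log t = 3 * l := by linarith
  rw [hlt, ← hct]
  have hB : (c^3/2 + 3*c - 4)^2 < c^3 + (c^3)^2/2 := by
    nlinarith [sq_nonneg (c-1), sq_nonneg (c-2), sq_nonneg (c^2-2*c), sq_nonneg (c^2-c-1),
      sq_nonneg (c^3-2*c^2), sq_nonneg (c^3-2*c^2+c), mul_pos hc0 hc0,
      sq_nonneg (c^3 - 6*c + 4)]
  rcases le_or_gt 0 (3*l + c^3/2 - 1) with hA | hA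
  · have hAB : 3*l + c^3/2 - 1 ≤ c^3/2 + 3*c - 4 := by linarith
    nlinarith [mul_le_mul hAB hAB hA (by linarith : (0:ℝ) ≤ c^3/2 + 3*c - 4)]
  · have hc3 : 1 < c^3 := by nlinarith
    nlinarith [sq_nonneg (3*l + c^3/2 - 1)]

lemma key2 (u : ℝ) (hu0 : 0 < u) (hu1 : u < 1) :
    (-2 * Real.log u + (1/u - 2))^2 + (-4/u - 2/u^2) < 0 := by
  have ht : 1 < 1/u := by rw [lt_div_iff₀ hu0]; linarith
  have h := key1 (1/u) ht
  have hlu : Real.log (1/u) = - Real.log u := by simp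
  rw [hlu] at h
  have e : 1/u^2 = (1/u)^2 := by rw [div_pow]; norm_num
  have hgen : (-2*Real.log u + (1/u - 2))^2 + (-4/u - 2/u^2)
      = (-2*Real.log u + (1/u - 2))^2 + (-(4*(1/u)) - 2*(1/u)^2) := by
    rw [← e]; ring
  rw [hgen]
  nlinarith [h]

lemma hasDerivAt_T (x : ℝ) (hx : -1/2 < x) :
    HasDerivAt Tfun (Tfun x * Gfun x) x := by
  have hu : (0:ℝ) < 1 + 2*x := by linarith
  have h1 : HasDerivAt (fun y : ℝ => 1 + 2*y) 2 x := by
    simpa using ((hasDerivAt_id x).const_mul (2:ℝ)).const_add 1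
  have h2 : HasDerivAt (fun y : ℝ => Real.log (1 + 2*y)) (2/(1 + 2*x)) x := by
    simpa using h1.log hu.ne'
  have h3 : HasDerivAt (fun y : ℝ => -1/2 - 2*y) (-2) x := by
    simpa using ((hasDerivAt_id x).const_mul (2:ℝ)).const_sub (-1/2)
  have h4 := (h3.mul h2).exp
  convert h4 using 1
  · rfl
  unfold Tfun Gfun
  simp only [Pi.mul_apply]
  field_simp
  ring

lemma hasDerivAt_G (x : ℝ) (hx : -1/2 < x) :
    HasDerivAt Gfun (-4/(1 + 2*x) - 2/(1 + 2*x)^2) x := by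
  have hu : (0:ℝ) < 1 + 2*x := by linarith
  have h1 : HasDerivAt (fun y : ℝ => 1 + 2*y) 2 x := by
    simpa using ((hasDerivAt_id x).const_mul (2:ℝ)).const_add 1
  have h2 : HasDerivAt (fun y : ℝ => Real.log (1 + 2*y)) (2/(1 + 2*x)) x := by
    simpa using h1.log hu.ne'
  have h5 : HasDerivAt (fun y : ℝ => 1/(1 + 2*y)) (-2/(1 + 2*x)^2) x := by
    simpa [one_div, Pi.inv_def] using h1.inv hu.ne'
  have h6 := (h2.const_mul (-2:ℝ)).add (h5.sub_const 2)
  have h7 : HasDerivAt Gfun (-2 * (2/(1 + 2*x)) + -2/(1 + 2*x)^2) x := h6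
  convert h7 using 1
  ring

lemma strict_concave : StrictConcaveOn ℝ (Set.Ioo (-(1:ℝ)/2) 0) Tfun := by
  apply strictConcaveOn_of_deriv2_neg (convex_Ioo _ _)
  · unfold Tfun
    apply ContinuousOn.rexp
    apply ContinuousOn.mul
    · fun_prop
    · apply ContinuousOn.log
      · fun_prop
      · intro x hx
        have := hx.1
        have : (0:ℝ) < 1 + 2*x := by linarith
        exact this.ne'
  · intro x hx
    rw [interior_Ioo] at hx
    have hx1 : -1/2 < x := by have := hx.1; linarith
    have hx2 : x < 0 := hx.2
    have hu0 : (0:ℝ) < 1 + 2*x := by linarith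
    have hu1 : 1 + 2*x < 1 := by linarith
    have hev : deriv Tfun =ᶠ[nhds x] fun y => Tfun y * Gfun y := by
      filter_upwards [eventually_gt_nhds hx1] with y hy
      exact (hasDerivAt_T y hy).deriv
    have hd2 : deriv (deriv Tfun) x
        = Tfun x * Gfun x * Gfun x + Tfun x * (-4/(1 + 2*x) - 2/(1 + 2*x)^2) := by
      rw [hev.deriv_eq]
      exact ((hasDerivAt_T x hx1).mul (hasDerivAt_G x hx1)).deriv
    show deriv^[2] Tfun x < 0
    rw [show deriv^[2] Tfun x = deriv (deriv Tfun) x from rfl, hd2]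
    have hT : 0 < Tfun x := Real.exp_pos _
    have hk := key2 (1 + 2*x) hu0 hu1
    have hGu : Gfun x = -2 * Real.log (1 + 2*x) + (1/(1 + 2*x) - 2) := rfl
    rw [hGu]
    nlinarith [mul_neg_of_pos_of_neg hT hk]

theorem stmt5 :
    ∀ l1 ∈ Set.Ioo (-(1 : ℝ)/2) 0, ∀ l2 ∈ Set.Ioo (-(1 : ℝ)/2) 0, l1 ≠ l2 →
      ∀ s ∈ Set.Ioo (0 : ℝ) 1,
        s * (1 + 2*l1) ^ (-(1 : ℝ)/2 - 2*l1) + (1 - s) * (1 + 2*l2) ^ (-(1 : ℝ)/2 - 2*l2) <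
          (1 + 2*(s*l1 + (1 - s)*l2)) ^ (-(1 : ℝ)/2 - 2*(s*l1 + (1 - s)*l2)) := by
  intro l1 h1 l2 h2 hne s hs
  have hrw : ∀ l : ℝ, l ∈ Set.Ioo (-(1:ℝ)/2) 0 →
      (1 + 2*l) ^ (-(1:ℝ)/2 - 2*l) = Tfun l := by
    intro l hl
    have h0 : (0:ℝ) < 1 + 2*l := by have := hl.1; linarith
    rw [Real.rpow_def_of_pos h0, Tfun, mul_comm]
  have hmem : s*l1 + (1 - s)*l2 ∈ Set.Ioo (-(1:ℝ)/2) 0 := by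
    constructor
    · nlinarith [h1.1, h2.1, hs.1, hs.2]
    · nlinarith [h1.2, h2.2, hs.1, hs.2]
  rw [hrw l1 h1, hrw l2 h2, hrw _ hmem]
  have := strict_concave.2 h1 h2 hne hs.1 (by linarith [hs.2] : (0:ℝ) < 1 - s) (by ring)
  simpa using this
end

section
/- As λ → ∞, T2(λ) is asymptotically equivalent to (1+λ)^{1/2+λ}: lim_{λ → ∞} [ (1+λ) / ( (1+2λ) sinh(1/(1+2λ)) ) ]^{1/2+λ} / (1+λ)^{1/2+λ} = 1. -/
open Real Filter

lemma sinh_le_mul_cosh {x : ℝ} (hx : 0 ≤ x) : Real.sinh x ≤ x * Real.cosh x := by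
  have hmono : MonotoneOn (fun t : ℝ => t * Real.cosh t - Real.sinh t) (Set.Ici 0) := by
    apply monotoneOn_of_deriv_nonneg (convex_Ici 0)
    · exact ((continuous_id.mul Real.continuous_cosh).sub Real.continuous_sinh).continuousOn
    · exact ((differentiable_id.mul Real.differentiable_cosh).sub
        Real.differentiable_sinh).differentiableOn
    · intro t ht
      rw [interior_Ici] at ht
      have hderiv : deriv (fun t : ℝ => t * Real.cosh t - Real.sinh t) t
          = t * Real.sinh t := by
        rw [deriv_fun_sub (by fun_prop) (by fun_prop), deriv_fun_mul (by fun_prop) (by fun_prop)]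
        simp [Real.deriv_cosh, Real.deriv_sinh]
      rw [hderiv]
      exact mul_nonneg ht.le (le_trans ht.le ((Real.self_le_sinh_iff).mpr ht.le))
  have h := hmono (Set.self_mem_Ici) (Set.mem_Ici.mpr hx) hx
  simpa using h

theorem stmt13 :
    Filter.Tendsto
      (fun l : ℝ =>
        ((1 + l) / ((1 + 2*l) * Real.sinh (1/(1 + 2*l)))) ^ ((1 : ℝ)/2 + l) /
          (1 + l) ^ ((1 : ℝ)/2 + l))
      Filter.atTop (nhds 1) := by
  set u : ℝ → ℝ := fun l => ((1:ℝ)/2 + l) * Real.log ((1 + 2*l) * Real.sinh (1/(1 + 2*l))) with hu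
  have hbounds : ∀ l : ℝ, 1 ≤ l → 0 ≤ u l ∧ u l ≤ 1 / (4 * (1 + 2*l)) := by
    intro l hl
    have h2l : (0:ℝ) < 1 + 2*l := by linarith
    set x : ℝ := 1/(1 + 2*l) with hxdef
    have hx0 : 0 < x := by positivity
    have hxinv : (1 + 2*l) * x = 1 := by rw [hxdef]; field_simp
    have hs : x ≤ Real.sinh x := (Real.self_le_sinh_iff).mpr hx0.le
    have hsp : 0 < Real.sinh x := lt_of_lt_of_le hx0 hs
    have hone : 1 ≤ (1 + 2*l) * Real.sinh x := by
      calc (1:ℝ) = (1 + 2*l) * x := hxinv.symm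
        _ ≤ (1 + 2*l) * Real.sinh x := by nlinarith
    have hlogpos : 0 ≤ Real.log ((1 + 2*l) * Real.sinh x) := Real.log_nonneg hone
    have hp : (0:ℝ) ≤ 1/2 + l := by linarith
    constructor
    · exact mul_nonneg hp hlogpos
    · have hub : (1 + 2*l) * Real.sinh x ≤ Real.exp (x^2/2) := by
        calc (1 + 2*l) * Real.sinh x ≤ (1 + 2*l) * (x * Real.cosh x) := by
              nlinarith [sinh_le_mul_cosh hx0.le]
          _ = Real.cosh x := by rw [← mul_assoc, hxinv, one_mul]
          _ ≤ Real.exp (x^2/2) := Real.cosh_le_exp_half_sq x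
      have hlog : Real.log ((1 + 2*l) * Real.sinh x) ≤ x^2/2 := by
        calc Real.log ((1 + 2*l) * Real.sinh x) ≤ Real.log (Real.exp (x^2/2)) :=
              Real.log_le_log (by linarith) hub
          _ = x^2/2 := Real.log_exp _
      have h1 : u l ≤ ((1:ℝ)/2 + l) * (x^2/2) := mul_le_mul_of_nonneg_left hlog hp
      refine h1.trans (le_of_eq ?_)
      rw [hxdef]
      field_simp
      ring
  have hupper : Tendsto (fun l : ℝ => 1 / (4 * (1 + 2*l))) atTop (nhds 0) := by
    have h1 : Tendsto (fun l : ℝ => 4*(1+2*l)) atTop atTop := by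
      apply Filter.Tendsto.const_mul_atTop (by norm_num : (0:ℝ) < 4)
      apply Filter.tendsto_atTop_add_const_left
      exact Filter.Tendsto.const_mul_atTop (by norm_num : (0:ℝ) < 2) tendsto_id
    have := h1.inv_tendsto_atTop
    simp only [Pi.inv_def] at this
    simpa [one_div] using this
  have hu0 : Tendsto u atTop (nhds 0) := by
    apply tendsto_of_tendsto_of_tendsto_of_le_of_le' tendsto_const_nhds hupper
    · filter_upwards [eventually_ge_atTop (1:ℝ)] with l hl using (hbounds l hl).1
    · filter_upwards [eventually_ge_atTop (1:ℝ)] with l hl using (hbounds l hl).2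
  have heq : ∀ᶠ l : ℝ in atTop,
      ((1 + l) / ((1 + 2*l) * Real.sinh (1/(1 + 2*l)))) ^ ((1 : ℝ)/2 + l) /
        (1 + l) ^ ((1 : ℝ)/2 + l) = Real.exp (-(u l)) := by
    filter_upwards [eventually_ge_atTop (1:ℝ)] with l hl
    have h2l : (0:ℝ) < 1 + 2*l := by linarith
    have h1l : (0:ℝ) < 1 + l := by linarith
    have hx0 : (0:ℝ) < 1/(1 + 2*l) := by positivity
    have hsp : 0 < Real.sinh (1/(1 + 2*l)) :=
      lt_of_lt_of_le hx0 ((Real.self_le_sinh_iff).mpr hx0.le)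
    have hbpos : 0 < (1 + 2*l) * Real.sinh (1/(1 + 2*l)) := by positivity
    rw [← Real.div_rpow (by positivity) h1l.le]
    have hbase : (1 + l) / ((1 + 2*l) * Real.sinh (1/(1 + 2*l))) / (1 + l)
        = ((1 + 2*l) * Real.sinh (1/(1 + 2*l)))⁻¹ := by
      field_simp
    rw [hbase, Real.rpow_def_of_pos (by positivity), Real.log_inv]
    congr 1
    rw [hu]
    ring
  rw [Filter.tendsto_congr' heq]
  have hfin : Tendsto (fun l => Real.exp (-(u l))) atTop (nhds (Real.exp (-0))) :=
    (Real.continuous_exp.tendsto _).comp hu0.neg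
  simpa using hfin
end
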